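/- Let d ≥ 1, r ∈ (2,∞) and μ0, μ1 > 0, and define S : M^d_sym → M^d_sym by S(D) = (μ0 + μ1|D|)^{r−2} D. Then S is continuously differentiable on M^d_sym, S(0) = 0, and there exist constants c0, c1, c2 > 0, depending only on μ0, μ1, r and d, such that for all B, D ∈ M^d_sym: c0(1+|D|)^{r−2}|B|² ≤ S'(D)[B] : B ≤ c1(1+|D|)^{r−2}|B|² and |S'(D)[B]| ≤ c2(1+|D|)^{r−2}|B|, where S'(D)[B] is the derivative of S at D applied to B. -/

import Mathlib

open MeasureTheory Real

noncomputable section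

/-- Partial derivative in direction `i` of a scalar function on `ℝ^d`. -/
def pd {d : ℕ} (f : (Fin d → ℝ) → ℝ) (i : Fin d) (x : Fin d → ℝ) : ℝ :=
  fderiv ℝ f x (Pi.single i 1)

/-- The periodic box `Ω = (0, 2π)^d`. -/
def box (d : ℕ) : Set (Fin d → ℝ) := Set.univ.pi fun _ => Set.Ioo 0 (2 * π)

/-- `2π`-periodicity in every coordinate direction. -/
def IsPer {d : ℕ} {E : Type*} (g : (Fin d → ℝ) → E) : Prop :=
  ∀ (x : Fin d → ℝ) (i : Fin d), g (x + Pi.single i (2 * π)) = g x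

/-- Frobenius norm of a `d × d` matrix. -/
def frob {d : ℕ} (M : Fin d → Fin d → ℝ) : ℝ := Real.sqrt (∑ i, ∑ j, M i j ^ 2)

/-- Inner (double-dot) product of `d × d` matrices: `A : B = ∑ᵢⱼ Aᵢⱼ Bᵢⱼ`. -/
def minner {d : ℕ} (A B : Fin d → Fin d → ℝ) : ℝ := ∑ i, ∑ j, A i j * B i j

/-- Symmetry of a `d × d` matrix. -/
def Symm {d : ℕ} (A : Fin d → Fin d → ℝ) : Prop := ∀ i j, A i j = A j i

/-- The gradient matrix `(∇u)ᵢⱼ = ∂ⱼuᵢ` of a vector field. -/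
def gradM {d : ℕ} (u : (Fin d → ℝ) → (Fin d → ℝ)) (x : Fin d → ℝ) : Fin d → Fin d → ℝ :=
  fun i j => pd (fun y => u y i) j x

/-- The symmetric part `Du = ½(∇u + (∇u)ᵀ)` of the gradient. -/
def symG {d : ℕ} (u : (Fin d → ℝ) → (Fin d → ℝ)) (x : Fin d → ℝ) : Fin d → Fin d → ℝ :=
  fun i j => (gradM u x i j + gradM u x j i) / 2

/-- Componentwise Laplacian `Δuᵢ = ∑ₖ ∂ₖ∂ₖ uᵢ`. -/
def lap {d : ℕ} (u : (Fin d → ℝ) → (Fin d → ℝ)) (i : Fin d) (x : Fin d → ℝ) : ℝ :=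
  ∑ k, pd (pd (fun y => u y i) k) k x

/-- Divergence-free condition `div u = ∑ᵢ ∂ᵢuᵢ = 0` everywhere. -/
def DivFree {d : ℕ} (u : (Fin d → ℝ) → (Fin d → ℝ)) : Prop :=
  ∀ x, ∑ i, pd (fun y => u y i) i x = 0

/-- The specific stress tensor `S(D) = (μ0 + μ1 |D|)^{r-2} D`. -/
def Sgen (d : ℕ) (r μ0 μ1 : ℝ) : (Fin d → Fin d → ℝ) → (Fin d → Fin d → ℝ) :=
  fun D i j => (μ0 + μ1 * frob D) ^ (r - 2) * D i j


section CoreIPS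

open Asymptotics Topology

variable {H : Type*} [NormedAddCommGroup H] [InnerProductSpace ℝ H]

variable (r μ0 μ1 : ℝ)

local notation "⟪" x ", " y "⟫" => @inner ℝ _ _ x y

/-- Candidate derivative of `x ↦ (μ0 + μ1‖x‖)^(r-2) • x`. -/
def Aop (x : H) : H →L[ℝ] H :=
  ((μ0 + μ1 * ‖x‖) ^ (r - 2)) • ContinuousLinearMap.id ℝ H +
    (((r - 2) * (μ0 + μ1 * ‖x‖) ^ (r - 2 - 1) * μ1 * ‖x‖⁻¹) • innerSL ℝ x).smulRight x

lemma Aop_apply (x b : H) :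
    Aop r μ0 μ1 x b = ((μ0 + μ1 * ‖x‖) ^ (r - 2)) • b +
      (((r - 2) * (μ0 + μ1 * ‖x‖) ^ (r - 2 - 1) * μ1 * ‖x‖⁻¹) * ⟪x, b⟫) • x := by
  simp [Aop, ContinuousLinearMap.smul_apply, smul_smul]

lemma Aop_zero : Aop r μ0 μ1 (0 : H)
    = ((μ0 + μ1 * ‖(0:H)‖) ^ (r - 2)) • ContinuousLinearMap.id ℝ H := by
  ext b
  simp [Aop]

variable {r μ0 μ1}

lemma hasFDerivAt_norm' {x : H} (hx : x ≠ 0) :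
    HasFDerivAt (fun y : H => ‖y‖) (‖x‖⁻¹ • innerSL ℝ x) x := by
  have hnx : (0:ℝ) < ‖x‖ := norm_pos_iff.2 hx
  have hsq : HasFDerivAt (fun y : H => ‖y‖ ^ 2) (2 • innerSL ℝ x) x :=
    (hasStrictFDerivAt_norm_sq x).hasFDerivAt
  have hs : HasDerivAt Real.sqrt (1 / (2 * Real.sqrt (‖x‖ ^ 2))) (‖x‖ ^ 2) :=
    Real.hasDerivAt_sqrt (by positivity)
  have h := hs.comp_hasFDerivAt x hsq
  rw [show (Real.sqrt ∘ fun y : H => ‖y‖ ^ 2) = fun y : H => ‖y‖ from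
    funext fun y => by simp [Real.sqrt_sq (norm_nonneg y)]] at h
  refine h.congr_fderiv ?_
  symm
  rw [Real.sqrt_sq (norm_nonneg x)]
  ext b
  simp only [ContinuousLinearMap.smul_apply, two_smul, ContinuousLinearMap.add_apply,
    smul_eq_mul]
  field_simp
  ring

lemma hasFDerivAt_core (hμ0 : 0 < μ0) (hμ1 : 0 < μ1) (x : H) :
    HasFDerivAt (fun y : H => ((μ0 + μ1 * ‖y‖) ^ (r - 2)) • y) (Aop r μ0 μ1 x) x := by
  by_cases hx : x = 0
  · subst hx
    rw [Aop_zero, hasFDerivAt_iff_isLittleO]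
    have heq : (fun y : H => ((μ0 + μ1 * ‖y‖) ^ (r - 2)) • y -
        ((μ0 + μ1 * ‖(0:H)‖) ^ (r - 2)) • (0:H) -
        (((μ0 + μ1 * ‖(0:H)‖) ^ (r - 2)) • ContinuousLinearMap.id ℝ H) (y - 0)) =
        fun y : H => ((μ0 + μ1 * ‖y‖) ^ (r - 2) - (μ0 + μ1 * ‖(0:H)‖) ^ (r - 2)) • y := by
      funext y; simp [sub_smul]
    rw [heq]
    rw [isLittleO_iff]
    intro c hc
    have hcont : ContinuousAt (fun y : H => (μ0 + μ1 * ‖y‖) ^ (r - 2)) 0 := by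
      apply ContinuousAt.rpow_const
      · exact (continuousAt_const.add (continuousAt_const.mul continuous_norm.continuousAt))
      · left; simp; positivity
    have hev := hcont.tendsto.eventually (Metric.closedBall_mem_nhds _ hc)
    filter_upwards [hev] with y hy
    rw [Real.dist_eq] at hy
    rw [norm_smul, Real.norm_eq_abs, sub_zero]
    exact mul_le_mul_of_nonneg_right hy (norm_nonneg y)
  · have hnx : (0:ℝ) < ‖x‖ := norm_pos_iff.2 hx
    have hbase : (0:ℝ) < μ0 + μ1 * ‖x‖ := by positivity
    have hn := hasFDerivAt_norm' hx
    have hd1 : HasDerivAt (fun t : ℝ => μ0 + μ1 * t) μ1 ‖x‖ := by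
      simpa using ((hasDerivAt_id ‖x‖).const_mul μ1).const_add μ0
    have hd2 : HasDerivAt (fun t : ℝ => (μ0 + μ1 * t) ^ (r - 2))
        (μ1 * (r - 2) * (μ0 + μ1 * ‖x‖) ^ (r - 2 - 1)) ‖x‖ :=
      hd1.rpow_const (Or.inl hbase.ne')
    have hΦ : HasFDerivAt (fun y : H => (μ0 + μ1 * ‖y‖) ^ (r - 2))
        ((μ1 * (r - 2) * (μ0 + μ1 * ‖x‖) ^ (r - 2 - 1)) • (‖x‖⁻¹ • innerSL ℝ x)) x :=
      hd2.comp_hasFDerivAt x hn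
    have h := hΦ.smul (hasFDerivAt_id x)
    refine h.congr_fderiv ?_
    symm
    rw [Aop]
    congr 1
    ext b
    simp only [ContinuousLinearMap.smulRight_apply, ContinuousLinearMap.smul_apply,
      smul_eq_mul, id]
    congr 1
    ring

lemma c_nonneg (hr : 2 < r) (hμ0 : 0 < μ0) (hμ1 : 0 < μ1) (x : H) :
    0 ≤ (r - 2) * (μ0 + μ1 * ‖x‖) ^ (r - 2 - 1) * μ1 * ‖x‖⁻¹ := by
  have h1 : (0:ℝ) ≤ r - 2 := by linarith
  have h2 : (0:ℝ) ≤ μ0 + μ1 * ‖x‖ := by positivity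
  have := Real.rpow_nonneg h2 (r - 2 - 1)
  have := inv_nonneg.2 (norm_nonneg x)
  positivity

lemma norm_part2_le (hr : 2 < r) (hμ0 : 0 < μ0) (hμ1 : 0 < μ1) (x : H) :
    ‖(((r - 2) * (μ0 + μ1 * ‖x‖) ^ (r - 2 - 1) * μ1 * ‖x‖⁻¹) • innerSL ℝ x).smulRight x‖
      ≤ (r - 2) * (μ0 + μ1 * ‖x‖) ^ (r - 2 - 1) * μ1 * ‖x‖ := by
  rw [ContinuousLinearMap.norm_smulRight_apply, norm_smul, Real.norm_eq_abs,
    innerSL_apply_norm, abs_of_nonneg (c_nonneg hr hμ0 hμ1 x)]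
  rcases eq_or_ne x 0 with h | h
  · simp [h]
  · have hx : (0:ℝ) < ‖x‖ := norm_pos_iff.2 h
    rw [show (r - 2) * (μ0 + μ1 * ‖x‖) ^ (r - 2 - 1) * μ1 * ‖x‖⁻¹ * ‖x‖ * ‖x‖
        = (r - 2) * (μ0 + μ1 * ‖x‖) ^ (r - 2 - 1) * μ1 * ‖x‖ * (‖x‖⁻¹ * ‖x‖) by ring,
      inv_mul_cancel₀ hx.ne', mul_one]

lemma smul_smulRight' (c : ℝ) (L : H →L[ℝ] ℝ) (v : H) :
    (c • L).smulRight v = c • (L.smulRight v) := by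
  ext b
  simp [smul_smul]

lemma continuous_Aop (hr : 2 < r) (hμ0 : 0 < μ0) (hμ1 : 0 < μ1) :
    Continuous (Aop r μ0 μ1 : H → H →L[ℝ] H) := by
  have hbase : ∀ x : H, 0 < μ0 + μ1 * ‖x‖ := fun x => by positivity
  have hφ : Continuous fun x : H => (μ0 + μ1 * ‖x‖) ^ (r - 2) :=
    (continuous_const.add (continuous_const.mul continuous_norm)).rpow_const
      (fun x => Or.inl (hbase x).ne')
  have hφ3 : Continuous fun x : H => (μ0 + μ1 * ‖x‖) ^ (r - 2 - 1) :=
    (continuous_const.add (continuous_const.mul continuous_norm)).rpow_const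
      (fun x => Or.inl (hbase x).ne')
  rw [continuous_iff_continuousAt]
  intro x
  unfold Aop
  apply ContinuousAt.add
  · exact (hφ.smul continuous_const).continuousAt
  · by_cases hx : x = 0
    · subst hx
      have h0 : ((((r - 2) * (μ0 + μ1 * ‖(0:H)‖) ^ (r - 2 - 1) * μ1 * ‖(0:H)‖⁻¹)) •
          innerSL ℝ (0:H)).smulRight (0:H) = 0 := by
        ext b; simp
      rw [ContinuousAt, h0]
      apply squeeze_zero_norm (norm_part2_le hr hμ0 hμ1)
      have hc : Continuous fun x : H => (r - 2) * (μ0 + μ1 * ‖x‖) ^ (r - 2 - 1) * μ1 * ‖x‖ :=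
        ((continuous_const.mul hφ3).mul continuous_const).mul continuous_norm
      have h := hc.tendsto 0
      simpa using h
    · have hnx : ‖x‖ ≠ 0 := norm_ne_zero_iff.2 hx
      simp only [smul_smulRight']
      apply ContinuousAt.smul (f := fun x : H => ((r - 2) * (μ0 + μ1 * ‖x‖) ^ (r - 2 - 1) * μ1 * ‖x‖⁻¹))
        (g := fun x : H => ((innerSL ℝ) x).smulRight x)
      · exact ((continuousAt_const.mul hφ3.continuousAt).mul continuousAt_const).mul
          (continuous_norm.continuousAt.inv₀ hnx)
      · exact ((isBoundedBilinearMap_smulRight (𝕜 := ℝ)).continuous.comp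
          ((innerSL ℝ).continuous.prodMk continuous_id)).continuousAt

lemma contDiff_core (hr : 2 < r) (hμ0 : 0 < μ0) (hμ1 : 0 < μ1) :
    ContDiff ℝ 1 (fun y : H => ((μ0 + μ1 * ‖y‖) ^ (r - 2)) • y) := by
  rw [contDiff_one_iff_fderiv]
  refine ⟨fun x => (hasFDerivAt_core hμ0 hμ1 x).differentiableAt, ?_⟩
  have : (fderiv ℝ (fun y : H => ((μ0 + μ1 * ‖y‖) ^ (r - 2)) • y)) = Aop r μ0 μ1 :=
    funext fun x => (hasFDerivAt_core hμ0 hμ1 x).fderiv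
  rw [this]
  exact continuous_Aop hr hμ0 hμ1

lemma scalar_low (hr : 2 < r) (hμ0 : 0 < μ0) (hμ1 : 0 < μ1) {t : ℝ} (ht : 0 ≤ t) :
    (min μ0 μ1) ^ (r - 2) * (1 + t) ^ (r - 2) ≤ (μ0 + μ1 * t) ^ (r - 2) := by
  rw [← Real.mul_rpow (le_min hμ0.le hμ1.le) (by positivity)]
  apply Real.rpow_le_rpow (by positivity) ?_ (by linarith)
  have h1 := min_le_left μ0 μ1
  have h2 := min_le_right μ0 μ1
  nlinarith

lemma scalar_high (hr : 2 < r) (hμ0 : 0 < μ0) (hμ1 : 0 < μ1) {t : ℝ} (ht : 0 ≤ t) :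
    (μ0 + μ1 * t) ^ (r - 2) ≤ (max μ0 μ1) ^ (r - 2) * (1 + t) ^ (r - 2) := by
  rw [← Real.mul_rpow (hμ0.le.trans (le_max_left _ _)) (by positivity)]
  apply Real.rpow_le_rpow (by positivity) ?_ (by linarith)
  have h1 := le_max_left μ0 μ1
  have h2 := le_max_right μ0 μ1
  nlinarith

lemma c_mul_sq (hr : 2 < r) (hμ0 : 0 < μ0) (hμ1 : 0 < μ1) (x : H) :
    ((r - 2) * (μ0 + μ1 * ‖x‖) ^ (r - 2 - 1) * μ1 * ‖x‖⁻¹) * ‖x‖ ^ 2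
      ≤ (r - 2) * (μ0 + μ1 * ‖x‖) ^ (r - 2) := by
  have hbase : (0:ℝ) < μ0 + μ1 * ‖x‖ := by positivity
  have hnr : (0:ℝ) ≤ (r - 2) * (μ0 + μ1 * ‖x‖) ^ (r - 2 - 1) :=
    mul_nonneg (by linarith) (Real.rpow_nonneg hbase.le _)
  rcases eq_or_ne x 0 with h | h
  · simp only [h, norm_zero]
    rw [show (0:ℝ) ^ 2 = 0 by norm_num, mul_zero]
    nlinarith [Real.rpow_nonneg (show (0:ℝ) ≤ μ0 + μ1 * 0 by positivity) (r - 2)]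
  · have hx : (0:ℝ) < ‖x‖ := norm_pos_iff.2 h
    have heq : ((r - 2) * (μ0 + μ1 * ‖x‖) ^ (r - 2 - 1) * μ1 * ‖x‖⁻¹) * ‖x‖ ^ 2
        = (r - 2) * (μ0 + μ1 * ‖x‖) ^ (r - 2 - 1) * (μ1 * ‖x‖) := by
      field_simp
    rw [heq]
    have hle : μ1 * ‖x‖ ≤ μ0 + μ1 * ‖x‖ := by linarith
    calc (r - 2) * (μ0 + μ1 * ‖x‖) ^ (r - 2 - 1) * (μ1 * ‖x‖)
        ≤ (r - 2) * (μ0 + μ1 * ‖x‖) ^ (r - 2 - 1) * (μ0 + μ1 * ‖x‖) :=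
          mul_le_mul_of_nonneg_left hle hnr
      _ = (r - 2) * (μ0 + μ1 * ‖x‖) ^ (r - 2) := by
          rw [mul_assoc, ← Real.rpow_add_one hbase.ne' (r - 2 - 1)]
          ring_nf

lemma inner_Aop (x b : H) :
    ⟪Aop r μ0 μ1 x b, b⟫ = (μ0 + μ1 * ‖x‖) ^ (r - 2) * ‖b‖ ^ 2 +
      ((r - 2) * (μ0 + μ1 * ‖x‖) ^ (r - 2 - 1) * μ1 * ‖x‖⁻¹) * ⟪x, b⟫ ^ 2 := by
  rw [Aop_apply, inner_add_left, real_inner_smul_left, real_inner_smul_left,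
    real_inner_self_eq_norm_sq]
  ring

lemma inner_sq_le (x b : H) : (⟪x, b⟫ : ℝ) ^ 2 ≤ ‖x‖ ^ 2 * ‖b‖ ^ 2 := by
  have h := abs_real_inner_le_norm x b
  have h2 : (⟪x, b⟫ : ℝ) ^ 2 ≤ (‖x‖ * ‖b‖) ^ 2 := by
    rw [← sq_abs]
    exact pow_le_pow_left₀ (abs_nonneg _) h 2
  nlinarith

lemma inner_Aop_lower (hr : 2 < r) (hμ0 : 0 < μ0) (hμ1 : 0 < μ1) (x b : H) :
    (min μ0 μ1) ^ (r - 2) * (1 + ‖x‖) ^ (r - 2) * ‖b‖ ^ 2 ≤ ⟪Aop r μ0 μ1 x b, b⟫ := by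
  rw [inner_Aop]
  have h1 := scalar_low hr hμ0 hμ1 (norm_nonneg x)
  have h2 := mul_nonneg (c_nonneg hr hμ0 hμ1 x) (sq_nonneg (⟪x, b⟫ : ℝ))
  nlinarith [sq_nonneg ‖b‖]

lemma inner_Aop_upper (hr : 2 < r) (hμ0 : 0 < μ0) (hμ1 : 0 < μ1) (x b : H) :
    ⟪Aop r μ0 μ1 x b, b⟫ ≤ ((r - 1) * (max μ0 μ1) ^ (r - 2)) * (1 + ‖x‖) ^ (r - 2) * ‖b‖ ^ 2 := by
  rw [inner_Aop]
  have hc := c_nonneg hr hμ0 hμ1 x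
  have hcs := inner_sq_le x b
  have hcsq := c_mul_sq hr hμ0 hμ1 x
  have hhigh := scalar_high hr hμ0 hμ1 (norm_nonneg x)
  have hφpos : (0:ℝ) ≤ (μ0 + μ1 * ‖x‖) ^ (r - 2) := Real.rpow_nonneg (by positivity) _
  calc (μ0 + μ1 * ‖x‖) ^ (r - 2) * ‖b‖ ^ 2 +
        ((r - 2) * (μ0 + μ1 * ‖x‖) ^ (r - 2 - 1) * μ1 * ‖x‖⁻¹) * ⟪x, b⟫ ^ 2
      ≤ (μ0 + μ1 * ‖x‖) ^ (r - 2) * ‖b‖ ^ 2 +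
        (((r - 2) * (μ0 + μ1 * ‖x‖) ^ (r - 2 - 1) * μ1 * ‖x‖⁻¹) * ‖x‖ ^ 2) * ‖b‖ ^ 2 := by
        have := mul_le_mul_of_nonneg_left hcs hc
        nlinarith
    _ ≤ (μ0 + μ1 * ‖x‖) ^ (r - 2) * ‖b‖ ^ 2 +
        ((r - 2) * (μ0 + μ1 * ‖x‖) ^ (r - 2)) * ‖b‖ ^ 2 := by
        have := mul_le_mul_of_nonneg_right hcsq (sq_nonneg ‖b‖)
        linarith
    _ = (r - 1) * ((μ0 + μ1 * ‖x‖) ^ (r - 2)) * ‖b‖ ^ 2 := by ring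
    _ ≤ (r - 1) * ((max μ0 μ1) ^ (r - 2) * (1 + ‖x‖) ^ (r - 2)) * ‖b‖ ^ 2 :=
        mul_le_mul_of_nonneg_right (mul_le_mul_of_nonneg_left hhigh (by linarith))
          (sq_nonneg _)
    _ = ((r - 1) * (max μ0 μ1) ^ (r - 2)) * (1 + ‖x‖) ^ (r - 2) * ‖b‖ ^ 2 := by ring

lemma norm_Aop_le (hr : 2 < r) (hμ0 : 0 < μ0) (hμ1 : 0 < μ1) (x b : H) :
    ‖Aop r μ0 μ1 x b‖ ≤ ((r - 1) * (max μ0 μ1) ^ (r - 2)) * (1 + ‖x‖) ^ (r - 2) * ‖b‖ := by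
  have hc := c_nonneg hr hμ0 hμ1 x
  have hcsq := c_mul_sq hr hμ0 hμ1 x
  have hhigh := scalar_high hr hμ0 hμ1 (norm_nonneg x)
  have hφpos : (0:ℝ) ≤ (μ0 + μ1 * ‖x‖) ^ (r - 2) := Real.rpow_nonneg (by positivity) _
  rw [Aop_apply]
  calc ‖((μ0 + μ1 * ‖x‖) ^ (r - 2)) • b +
        (((r - 2) * (μ0 + μ1 * ‖x‖) ^ (r - 2 - 1) * μ1 * ‖x‖⁻¹) * ⟪x, b⟫) • x‖
      ≤ ‖((μ0 + μ1 * ‖x‖) ^ (r - 2)) • b‖ +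
        ‖(((r - 2) * (μ0 + μ1 * ‖x‖) ^ (r - 2 - 1) * μ1 * ‖x‖⁻¹) * ⟪x, b⟫) • x‖ :=
        norm_add_le _ _
    _ = (μ0 + μ1 * ‖x‖) ^ (r - 2) * ‖b‖ +
        ((r - 2) * (μ0 + μ1 * ‖x‖) ^ (r - 2 - 1) * μ1 * ‖x‖⁻¹) * |(⟪x, b⟫ : ℝ)| * ‖x‖ := by
        rw [norm_smul, norm_smul, Real.norm_eq_abs, Real.norm_eq_abs, abs_of_nonneg hφpos,
          abs_mul, abs_of_nonneg hc]
    _ ≤ (μ0 + μ1 * ‖x‖) ^ (r - 2) * ‖b‖ +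
        ((r - 2) * (μ0 + μ1 * ‖x‖) ^ (r - 2 - 1) * μ1 * ‖x‖⁻¹) * (‖x‖ * ‖b‖) * ‖x‖ := by
        have h := abs_real_inner_le_norm x b
        nlinarith [norm_nonneg x, mul_le_mul_of_nonneg_right (mul_le_mul_of_nonneg_left h hc)
          (norm_nonneg x)]
    _ = (μ0 + μ1 * ‖x‖) ^ (r - 2) * ‖b‖ +
        (((r - 2) * (μ0 + μ1 * ‖x‖) ^ (r - 2 - 1) * μ1 * ‖x‖⁻¹) * ‖x‖ ^ 2) * ‖b‖ := by ring
    _ ≤ (μ0 + μ1 * ‖x‖) ^ (r - 2) * ‖b‖ +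
        ((r - 2) * (μ0 + μ1 * ‖x‖) ^ (r - 2)) * ‖b‖ := by
        have := mul_le_mul_of_nonneg_right hcsq (norm_nonneg b)
        linarith
    _ = (r - 1) * ((μ0 + μ1 * ‖x‖) ^ (r - 2)) * ‖b‖ := by ring
    _ ≤ (r - 1) * ((max μ0 μ1) ^ (r - 2) * (1 + ‖x‖) ^ (r - 2)) * ‖b‖ :=
        mul_le_mul_of_nonneg_right (mul_le_mul_of_nonneg_left hhigh (by linarith))
          (norm_nonneg b)
    _ = ((r - 1) * (max μ0 μ1) ^ (r - 2)) * (1 + ‖x‖) ^ (r - 2) * ‖b‖ := by ring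

end CoreIPS

/-- Identification of the matrix space with the Euclidean space on `Fin d × Fin d`. -/
def eM (d : ℕ) : (Fin d → Fin d → ℝ) ≃L[ℝ] EuclideanSpace ℝ (Fin d × Fin d) :=
  ((LinearEquiv.curry ℝ ℝ (Fin d) (Fin d)).symm.toContinuousLinearEquiv).trans
    (EuclideanSpace.equiv (Fin d × Fin d) ℝ).symm

lemma eM_apply {d : ℕ} (M : Fin d → Fin d → ℝ) (p : Fin d × Fin d) :
    eM d M p = M p.1 p.2 := rfl

lemma frob_eq {d : ℕ} (M : Fin d → Fin d → ℝ) : frob M = ‖eM d M‖ := by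
  rw [frob, EuclideanSpace.norm_eq]
  congr 1
  rw [Fintype.sum_prod_type]
  simp [eM_apply, Real.norm_eq_abs, sq_abs]

lemma minner_eq {d : ℕ} (A B : Fin d → Fin d → ℝ) :
    minner A B = inner ℝ (eM d A) (eM d B) := by
  rw [minner, PiLp.inner_apply, Fintype.sum_prod_type]
  simp [eM_apply, RCLike.inner_apply, conj_trivial, mul_comm]

lemma Sgen_eq {d : ℕ} (r μ0 μ1 : ℝ) (D : Fin d → Fin d → ℝ) :
    Sgen d r μ0 μ1 D = (eM d).symm (((μ0 + μ1 * ‖eM d D‖) ^ (r - 2)) • eM d D) := by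
  funext i j
  rw [_root_.map_smul]
  rw [show (eM d).symm (eM d D) = D from (eM d).symm_apply_apply D]
  rw [← frob_eq]
  rfl

lemma hasFDerivAt_Sgen {d : ℕ} {r μ0 μ1 : ℝ} (hμ0 : 0 < μ0) (hμ1 : 0 < μ1)
    (D : Fin d → Fin d → ℝ) :
    HasFDerivAt (Sgen d r μ0 μ1)
      ((((eM d).symm : EuclideanSpace ℝ (Fin d × Fin d) →L[ℝ] (Fin d → Fin d → ℝ))).comp
        ((Aop r μ0 μ1 (eM d D)).comp
          ((eM d : (Fin d → Fin d → ℝ) →L[ℝ] EuclideanSpace ℝ (Fin d × Fin d))))) D := by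
  have h1 : HasFDerivAt (⇑(eM d))
      ((eM d : (Fin d → Fin d → ℝ) →L[ℝ] EuclideanSpace ℝ (Fin d × Fin d))) D :=
    (eM d).hasFDerivAt
  have h2 := (hasFDerivAt_core (r := r) hμ0 hμ1 (eM d D)).comp D h1
  have h3 := ((eM d).symm.hasFDerivAt).comp D h2
  have heq : Sgen d r μ0 μ1 = (⇑(eM d).symm ∘
      (fun y : EuclideanSpace ℝ (Fin d × Fin d) => ((μ0 + μ1 * ‖y‖) ^ (r - 2)) • y) ∘ ⇑(eM d)) :=
    funext fun D => Sgen_eq r μ0 μ1 D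
  rw [heq]
  exact h3

lemma fderiv_Sgen_apply {d : ℕ} {r μ0 μ1 : ℝ} (hμ0 : 0 < μ0) (hμ1 : 0 < μ1)
    (D B : Fin d → Fin d → ℝ) :
    fderiv ℝ (Sgen d r μ0 μ1) D B = (eM d).symm (Aop r μ0 μ1 (eM d D) (eM d B)) := by
  rw [(hasFDerivAt_Sgen hμ0 hμ1 D).fderiv]
  rfl


/-- the typical example satisfies the assumptions (h1) and (h2). -/
theorem stmt_7 (d : ℕ) (hd : 1 ≤ d) (r μ0 μ1 : ℝ)
    (hr : 2 < r) (hμ0 : 0 < μ0) (hμ1 : 0 < μ1) :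
    ContDiff ℝ 1 (Sgen d r μ0 μ1) ∧ Sgen d r μ0 μ1 0 = 0 ∧
    ∃ c0 > 0, ∃ c1 > 0, ∃ c2 > 0,
      ∀ B D : Fin d → Fin d → ℝ, Symm B → Symm D →
        (c0 * (1 + frob D) ^ (r - 2) * frob B ^ 2
            ≤ minner (fderiv ℝ (Sgen d r μ0 μ1) D B) B ∧
          minner (fderiv ℝ (Sgen d r μ0 μ1) D B) B
            ≤ c1 * (1 + frob D) ^ (r - 2) * frob B ^ 2) ∧
        frob (fderiv ℝ (Sgen d r μ0 μ1) D B) ≤ c2 * (1 + frob D) ^ (r - 2) * frob B := by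
  have hcd : ContDiff ℝ 1 (Sgen d r μ0 μ1) := by
    have heq : Sgen d r μ0 μ1 = (⇑(eM d).symm ∘
        (fun y : EuclideanSpace ℝ (Fin d × Fin d) => ((μ0 + μ1 * ‖y‖) ^ (r - 2)) • y) ∘
        ⇑(eM d)) := funext fun D => Sgen_eq r μ0 μ1 D
    rw [heq]
    exact ((eM d).symm.contDiff.comp (contDiff_core hr hμ0 hμ1)).comp (eM d).contDiff
  refine ⟨hcd, ?_, ?_⟩
  · funext i j
    simp [Sgen, mul_comm]
  · refine ⟨(min μ0 μ1) ^ (r - 2), Real.rpow_pos_of_pos (lt_min hμ0 hμ1) _,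
      (r - 1) * (max μ0 μ1) ^ (r - 2),
      mul_pos (by linarith) (Real.rpow_pos_of_pos (lt_of_lt_of_le hμ0 (le_max_left _ _)) _),
      (r - 1) * (max μ0 μ1) ^ (r - 2),
      mul_pos (by linarith) (Real.rpow_pos_of_pos (lt_of_lt_of_le hμ0 (le_max_left _ _)) _),
      ?_⟩
    intro B D _ _
    have hfd : fderiv ℝ (Sgen d r μ0 μ1) D B = (eM d).symm (Aop r μ0 μ1 (eM d D) (eM d B)) :=
      fderiv_Sgen_apply hμ0 hμ1 D B
    have hmi : minner (fderiv ℝ (Sgen d r μ0 μ1) D B) B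
        = inner ℝ (Aop r μ0 μ1 (eM d D) (eM d B)) (eM d B) := by
      rw [hfd, minner_eq, (eM d).apply_symm_apply]
    have hfr : frob (fderiv ℝ (Sgen d r μ0 μ1) D B) = ‖Aop r μ0 μ1 (eM d D) (eM d B)‖ := by
      rw [hfd, frob_eq, (eM d).apply_symm_apply]
    rw [hmi, hfr, frob_eq D, frob_eq B]
    exact ⟨⟨inner_Aop_lower hr hμ0 hμ1 (eM d D) (eM d B),
      inner_Aop_upper hr hμ0 hμ1 (eM d D) (eM d B)⟩,
      norm_Aop_le hr hμ0 hμ1 (eM d D) (eM d B)⟩
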